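/- With the Gauss group of order 2q as above (q a power of 2), if an ideal I of Z[i] has norm ≡ 5 mod 8, then its Gauss-class generates the Gauss group. -/

import Mathlib

open GaussianInt

/-- Gauss-equivalence (level `4q`) on (normalized generators of) ideals of odd norm in
`Z[i]` : `α ~ β` iff `N·α ≡ β (mod 4q)` for some integer `N`. -/
def GaussEq (q : ℕ) (α β : GaussianInt) : Prop :=
  ∃ N : ℤ, ((4 * q : ℤ) : GaussianInt) ∣ ((N : GaussianInt) * α - β)

private lemma dvd_step {x E h : ℤ} (k : ℕ) (key : x = 2 ^ (k + 1) * E)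
    (hE : E = h + h) : (2 : ℤ) ^ (k + 2) ∣ x :=
  ⟨h, by rw [key, hE]; ring⟩

private lemma pow_parity (α : GaussianInt) (hre : Odd α.re) (him : Even α.im) :
    ∀ n : ℕ, Odd ((α ^ n).re) ∧ Even ((α ^ n).im) := by
  intro n
  induction n with
  | zero => constructor <;> simp
  | succ n ih =>
    obtain ⟨h1, h2⟩ := ih
    constructor
    · rw [pow_succ, Zsqrtd.re_mul]
      exact (h1.mul hre).add_even (him.mul_left _)
    · rw [pow_succ, Zsqrtd.im_mul]
      exact (him.mul_left _).add (h2.mul_right _)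

private lemma pow2_struct (α : GaussianInt) (hre : Odd α.re) (b : ℤ)
    (hb : α.im = 2 * b) (hbodd : Odd b) :
    ∀ j : ℕ, ∃ w : ℤ, Odd w ∧ (α ^ 2 ^ j).im = 2 ^ (j + 1) * w := by
  have him : Even α.im := ⟨b, by omega⟩
  intro j
  induction j with
  | zero => exact ⟨b, hbodd, by simpa using hb⟩
  | succ j ih =>
    obtain ⟨w, hw, h⟩ := ih
    have hreo : Odd ((α ^ 2 ^ j).re) := (pow_parity α hre him _).1
    refine ⟨w * (α ^ 2 ^ j).re, hw.mul hreo, ?_⟩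
    have h2 : (2 : ℕ) ^ (j + 1) = 2 ^ j + 2 ^ j := by ring
    rw [h2, pow_add, Zsqrtd.im_mul, h]
    ring

private lemma main_ind (α : GaussianInt) (hre : Odd α.re) (b : ℤ)
    (hb : α.im = 2 * b) (hbodd : Odd b)
    (β : GaussianInt) (hcre : Odd β.re) (hcim : Even β.im) :
    ∀ k : ℕ, ∃ n : ℕ, ∃ N : ℤ, Odd N ∧
      ((2 : ℤ) ^ (k + 1) ∣ (N * β.re - (α ^ n).re)) ∧
      ((2 : ℤ) ^ (k + 1) ∣ (N * β.im - (α ^ n).im)) := by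
  have him : Even α.im := ⟨b, by omega⟩
  intro k
  induction k with
  | zero =>
    refine ⟨0, 1, odd_one, ?_, ?_⟩
    · have h : Even ((1 : ℤ) * β.re - (α ^ 0).re) := by
        simp only [pow_zero, Zsqrtd.re_one, one_mul]
        exact hcre.sub_odd odd_one
      obtain ⟨r, hr⟩ := h
      exact ⟨r, by rw [hr]; ring⟩
    · have h : Even ((1 : ℤ) * β.im - (α ^ 0).im) := by
        simp only [pow_zero, Zsqrtd.im_one, one_mul, sub_zero]
        exact hcim
      obtain ⟨r, hr⟩ := h
      exact ⟨r, by rw [hr]; ring⟩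
  | succ k ih =>
    obtain ⟨n, N, hN, ⟨g1, hg1⟩, ⟨g2, hg2⟩⟩ := ih
    obtain ⟨w, hw, him2⟩ := pow2_struct α hre b hb hbodd k
    set s := (α ^ 2 ^ k).re with hs_def
    have hsodd : Odd s := (pow_parity α hre him _).1
    have hpodd : Odd ((α ^ n).re) := (pow_parity α hre him _).1
    have hueven : Even ((α ^ n).im) := (pow_parity α hre him _).2
    set p := (α ^ n).re with hp_def
    set u := (α ^ n).im with hu_def
    have hNbre : Odd (N * β.re) := hN.mul hcre
    have hNbim : Even (N * β.im) := hcim.mul_left N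
    have hP : (α ^ (n + 2 ^ k)).re = p * s - u * (2 ^ (k + 1) * w) := by
      rw [pow_add, Zsqrtd.re_mul, him2]; ring
    have hU : (α ^ (n + 2 ^ k)).im = p * (2 ^ (k + 1) * w) + u * s := by
      rw [pow_add, Zsqrtd.im_mul, him2]
    have hek : Odd ((1 : ℤ) + 2 ^ (k + 1)) :=
      Even.one_add ⟨2 ^ k, by ring⟩
    rcases Int.even_or_odd g1 with e1 | o1 <;> rcases Int.even_or_odd g2 with e2 | o2
    · obtain ⟨r1, hr1⟩ := e1
      obtain ⟨r2, hr2⟩ := e2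
      exact ⟨n, N, hN, dvd_step k hg1 hr1, dvd_step k hg2 hr2⟩
    · obtain ⟨r1, hr1⟩ := (e1.mul_left s).add (hueven.mul_left w)
      obtain ⟨r2, hr2⟩ := (hsodd.mul o2).sub_odd (hw.mul hpodd)
      refine ⟨n + 2 ^ k, N * s, hN.mul hsodd, ?_, ?_⟩
      · exact dvd_step k (by rw [hP]; linear_combination s * hg1) hr1
      · exact dvd_step k (by rw [hU]; linear_combination s * hg2) hr2
    · obtain ⟨r1, hr1⟩ := o1.add_odd hNbre
      obtain ⟨r2, hr2⟩ := e2.add hNbim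
      refine ⟨n, N * (1 + 2 ^ (k + 1)), hN.mul hek, ?_, ?_⟩
      · exact dvd_step k (by linear_combination hg1) hr1
      · exact dvd_step k (by linear_combination hg2) hr2
    · obtain ⟨r1, hr1⟩ := ((o1.add_odd hNbre).mul_left s).add (hueven.mul_left w)
      obtain ⟨r2, hr2⟩ := (hsodd.mul (o2.add_even hNbim)).sub_odd (hw.mul hpodd)
      refine ⟨n + 2 ^ k, N * s * (1 + 2 ^ (k + 1)), (hN.mul hsodd).mul hek, ?_, ?_⟩
      · exact dvd_step k (by rw [hP]; linear_combination s * hg1) hr1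
      · exact dvd_step k (by rw [hU]; linear_combination s * hg2) hr2

/-- If an ideal of `Z[i]` (with normalized generator `α = a + 2bi`, `a` odd) has norm
`≡ 5 mod 8`, then its Gauss-class generates the Gauss group: every class is a power
of the class of `α`. -/
theorem stmt12 (e : ℕ) (q : ℕ) (hq : q = 2 ^ e)
    (α : GaussianInt) (hre : Odd α.re) (him : Even α.im)
    (hnorm : α.norm % 8 = 5) :
    ∀ β : GaussianInt, Odd β.re → Even β.im → ∃ n : ℕ, GaussEq q β (α ^ n) := by
  intro β hβre hβim
  obtain ⟨b0, hb0⟩ := him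
  have hb : α.im = 2 * b0 := by omega
  have hnormeq : α.norm = α.re * α.re + α.im * α.im := by
    simp [Zsqrtd.norm]
  obtain ⟨t, ht⟩ := hre
  obtain ⟨r, hrr⟩ := Int.even_mul_succ_self t
  have hsq : α.re * α.re = 8 * r + 1 := by rw [ht]; linear_combination 4 * hrr
  have hbodd : Odd b0 := by
    rcases Int.even_or_odd b0 with he | ho
    · exfalso
      obtain ⟨s, hss⟩ := he
      obtain ⟨X, hX⟩ : ∃ X : ℤ, α.norm = 8 * r + 1 + 16 * X :=
        ⟨s * s, by rw [hnormeq, hsq, hb, hss]; ring⟩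
      omega
    · exact ho
  obtain ⟨n, N, hNodd, h1, h2⟩ :=
    main_ind α ⟨t, ht⟩ b0 hb hbodd β hβre hβim (e + 1)
  refine ⟨n, N, ?_⟩
  have h4q : (4 * (q : ℤ)) = 2 ^ (e + 1 + 1) := by
    subst hq; push_cast; ring
  rw [h4q, Zsqrtd.intCast_dvd]
  constructor
  · have hcomp : ((N : GaussianInt) * β - α ^ n).re = N * β.re - (α ^ n).re := by
      simp [Zsqrtd.re_sub, Zsqrtd.re_mul, Zsqrtd.re_intCast, Zsqrtd.im_intCast]
    rw [hcomp]; exact h1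
  · have hcomp : ((N : GaussianInt) * β - α ^ n).im = N * β.im - (α ^ n).im := by
      simp [Zsqrtd.im_sub, Zsqrtd.im_mul, Zsqrtd.re_intCast, Zsqrtd.im_intCast]
    rw [hcomp]; exact h2
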